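/- Let 1 ≤ q < 2 and let f be a probability density on ℝ with ν_q(f) = ∫ f(x)^q dx < ∞, ν_{2q−1}(f) = ∫ f(x)^{2q−1} dx < ∞, finite q-mean μ_q(f), and finite second moment τ = ∫ x² f(x)^{2q−1} dx. Then, as ξ → 0, F_q[f](ξ) = 1 + i ξ μ_q(f) ν_q(f) − (q/2) ξ² τ + o(ξ²); that is, ( F_q[f](ξ) − 1 − i ξ μ_q(f) ν_q(f) + (q/2) ξ² τ ) / ξ² → 0 as ξ → 0. -/

import Mathlib

open MeasureTheory Filter Real Topology

/-- The `q`-exponential `e_q^x = [1 + (1-q)x]_+^{1/(1-q)}` (with `e_1^x = e^x`). -/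
noncomputable def qExp (q x : ℝ) : ℝ :=
  if q = 1 then Real.exp x else (max (1 + (1 - q) * x) 0) ^ (1 / (1 - q))

/-- The `q`-exponential of a complex argument, via the principal power. -/
noncomputable def qExpC (q : ℝ) (w : ℂ) : ℂ :=
  if q = 1 then Complex.exp w else (1 + (1 - (q : ℂ)) * w) ^ ((1 : ℂ) / (1 - (q : ℂ)))

/-- The `q`-product on complex numbers, via principal powers. -/
noncomputable def qProdC (q : ℝ) (x y : ℂ) : ℂ :=
  if q = 1 then x * y
  else (x ^ ((1 : ℂ) - (q : ℂ)) + y ^ ((1 : ℂ) - (q : ℂ)) - 1) ^ ((1 : ℂ) / (1 - (q : ℂ)))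

/-- The normalizing constant `C_q = ∫ e_q^{-x²} dx`. -/
noncomputable def qC (q : ℝ) : ℝ := ∫ x : ℝ, qExp q (-x ^ 2)

/-- The `q`-Gaussian `G_q(β; x) = (√β / C_q) e_q^{-βx²}`. -/
noncomputable def qGaussian (q β x : ℝ) : ℝ := (Real.sqrt β / qC q) * qExp q (-(β * x ^ 2))

/-- The `q`-Fourier transform `F_q[f](ξ) = ∫ f(x) e_q^{i x ξ f(x)^{q-1}} dx`. -/
noncomputable def qFourier (q : ℝ) (f : ℝ → ℝ) (ξ : ℝ) : ℂ :=
  ∫ x : ℝ, (f x : ℂ) * qExpC q (Complex.I * (x : ℂ) * (ξ : ℂ) * ((f x ^ (q - 1) : ℝ) : ℂ))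

/-- The `q`-mean `μ_q(f) = ∫ x f(x)^q dx / ∫ f(x)^q dx`. -/
noncomputable def qMean (q : ℝ) (f : ℝ → ℝ) : ℝ :=
  (∫ x : ℝ, x * f x ^ q) / (∫ x : ℝ, f x ^ q)

/-- The `q`-variance `σ_q²(f) = ∫ (x-μ_q(f))² f(x)^q dx / ∫ f(x)^q dx`. -/
noncomputable def qVar (q : ℝ) (f : ℝ → ℝ) : ℝ :=
  (∫ x : ℝ, (x - qMean q f) ^ 2 * f x ^ q) / (∫ x : ℝ, f x ^ q)

/-- Iterated `q`-product `w ⊗_q ⋯ ⊗_q w` (`N` factors). -/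
noncomputable def qProdPow (q : ℝ) (w : ℂ) : ℕ → ℂ
  | 0 => 1
  | 1 => w
  | n + 2 => qProdC q w (qProdPow q w (n + 1))

/-- `z(s) = (1+s)/(3-s)`. -/
noncomputable def zmap (s : ℝ) : ℝ := (1 + s) / (3 - s)

/-- The inverse of `z`: `z⁻¹(t) = (3t-1)/(1+t)`. -/
noncomputable def zinvmap (t : ℝ) : ℝ := (3 * t - 1) / (1 + t)

section QFourierAux
open Complex in
/-- If `g, g', g''` vanish at `0` and `‖g'''‖ ≤ M` everywhere, then `‖g t‖ ≤ M |t|³`. -/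
lemma triple_deriv_bound {g g1 g2 g3 : ℝ → ℂ} {M : ℝ}
    (hg : ∀ t, HasDerivAt g (g1 t) t) (hg1 : ∀ t, HasDerivAt g1 (g2 t) t)
    (hg2 : ∀ t, HasDerivAt g2 (g3 t) t)
    (h0 : g 0 = 0) (h10 : g1 0 = 0) (h20 : g2 0 = 0)
    (hM : ∀ t, ‖g3 t‖ ≤ M) (t : ℝ) : ‖g t‖ ≤ M * |t| ^ 3 := by
  have hM0 : 0 ≤ M := le_trans (norm_nonneg _) (hM 0)
  have habs : ∀ u ∈ Set.uIcc (0:ℝ) t, |u| ≤ |t| := by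
    intro u hu
    rw [Set.mem_uIcc] at hu
    rcases hu with ⟨h1, h2⟩ | ⟨h1, h2⟩
    · rw [_root_.abs_of_nonneg h1]; exact h2.trans (le_abs_self t)
    · rw [_root_.abs_of_nonpos h2]; exact (neg_le_neg h1).trans (neg_le_abs t)
  set s := Set.uIcc (0:ℝ) t with hs
  have step : ∀ (F F' : ℝ → ℂ) (C : ℝ), (∀ u, HasDerivAt F (F' u) u) →
      (∀ u ∈ s, ‖F' u‖ ≤ C) → F 0 = 0 → ∀ u ∈ s, ‖F u‖ ≤ C * |u| := by
    intro F F' C hF hC hF0 u hu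
    have := Convex.norm_image_sub_le_of_norm_hasDerivWithin_le
      (f := F) (f' := F') (s := s)
      (fun v hv => (hF v).hasDerivWithinAt) hC (convex_uIcc 0 t)
      Set.left_mem_uIcc hu
    simpa [hF0, Real.norm_eq_abs] using this
  have hb2 : ∀ u ∈ s, ‖g2 u‖ ≤ M * |t| := fun u hu =>
    (step g2 g3 M hg2 (fun v _ => hM v) h20 u hu).trans
      (mul_le_mul_of_nonneg_left (habs u hu) hM0)
  have hb1 : ∀ u ∈ s, ‖g1 u‖ ≤ (M * |t|) * |t| := fun u hu =>
    (step g1 g2 (M * |t|) hg1 hb2 h10 u hu).trans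
      (mul_le_mul_of_nonneg_left (habs u hu) (by positivity))
  have := step g g1 (M * |t| * |t|) hg hb1 h0 t Set.right_mem_uIcc
  exact le_of_le_of_eq this (by ring)


lemma qExpC_taylor (q : ℝ) (hq1 : 1 ≤ q) (hq2 : q < 2) (t : ℝ) :
    ‖qExpC q (Complex.I * t) - 1 - Complex.I * t + ((q : ℂ)/2) * (t : ℂ)^2‖ ≤ 6 * |t| ^ 3 := by
  have hlin : ∀ (a : ℂ) (u : ℝ), HasDerivAt (fun v : ℝ => a * (v : ℂ)) a u := by
    intro a u
    simpa using (Complex.ofRealCLM.hasDerivAt (x := u)).const_mul a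
  have hsq : ∀ u : ℝ, HasDerivAt (fun v : ℝ => ((v : ℂ))^2) (2 * (u : ℂ)) u := by
    intro u
    have h := (Complex.ofRealCLM.hasDerivAt (x := u)).mul (Complex.ofRealCLM.hasDerivAt (x := u))
    simp [pow_two, two_mul] at h ⊢
    exact h
  have hqsq : ∀ u : ℝ, HasDerivAt (fun v : ℝ => ((q : ℂ)/2) * ((v : ℂ))^2) ((q : ℂ) * u) u := by
    intro u
    refine ((hsq u).const_mul ((q : ℂ)/2)).congr_deriv ?_
    ring
  rcases eq_or_lt_of_le hq1 with hq | hq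
  · -- q = 1
    subst hq
    have hexp : ∀ u : ℝ, HasDerivAt (fun v : ℝ => Complex.exp (Complex.I * v))
        (Complex.I * Complex.exp (Complex.I * u)) u := by
      intro u
      simpa [mul_comm] using (hlin Complex.I u).cexp
    set g : ℝ → ℂ := fun u => Complex.exp (Complex.I * u) - 1 - Complex.I * u
      + (((1:ℝ) : ℂ)/2) * ((u : ℂ))^2 with hgdef
    set g1 : ℝ → ℂ := fun u => Complex.I * Complex.exp (Complex.I * u) - Complex.I
      + ((1:ℝ) : ℂ) * u with hg1def
    set g2 : ℝ → ℂ := fun u => -Complex.exp (Complex.I * u) + 1 with hg2def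
    set g3 : ℝ → ℂ := fun u => -(Complex.I * Complex.exp (Complex.I * u)) with hg3def
    have hg : ∀ u, HasDerivAt g (g1 u) u := by
      intro u
      exact (((hexp u).sub_const 1).sub (hlin Complex.I u)).add (hqsq u)
    have hg1 : ∀ u, HasDerivAt g1 (g2 u) u := by
      intro u
      have h := (((hexp u).const_mul Complex.I).sub_const Complex.I).add (hlin (((1:ℝ)):ℂ) u)
      refine h.congr_deriv ?_
      rw [hg2def]
      simp only []
      rw [← mul_assoc, Complex.I_mul_I]
      push_cast
      ring
    have hg2 : ∀ u, HasDerivAt g2 (g3 u) u := by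
      intro u
      exact ((hexp u).neg).add_const 1
    have hM : ∀ u, ‖g3 u‖ ≤ 6 := by
      intro u
      have : ‖g3 u‖ = 1 := by
        simp [hg3def, Complex.norm_exp]
      rw [this]; norm_num
    have h0 : g 0 = 0 := by simp [hgdef]
    have h10 : g1 0 = 0 := by simp [hg1def]
    have h20 : g2 0 = 0 := by simp [hg2def]
    have := triple_deriv_bound hg hg1 hg2 h0 h10 h20 hM t
    have hq1' : qExpC 1 (Complex.I * t) = Complex.exp (Complex.I * t) := by simp [qExpC]
    rw [hq1']
    exact this
  · -- 1 < q
    have hqR : q ≠ 1 := hq.ne'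
    have hqC : (q : ℂ) ≠ 1 := by exact_mod_cast hqR
    set c : ℂ := 1 - (q : ℂ) with hcdef
    have hc : c ≠ 0 := sub_ne_zero.mpr (Ne.symm hqC)
    set b : ℂ := 1 / c with hbdef
    set z : ℝ → ℂ := fun u => 1 + c * Complex.I * u with hzdef
    have hbre : b = ((1 / (1 - q) : ℝ) : ℂ) := by rw [hbdef, hcdef]; push_cast; ring
    have hzre : ∀ u : ℝ, (z u).re = 1 := by
      intro u
      simp [hzdef, hcdef, Complex.add_re, Complex.mul_re, Complex.mul_im]
    have hslit : ∀ u : ℝ, z u ∈ Complex.slitPlane := by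
      intro u
      rw [Complex.mem_slitPlane_iff]
      left; rw [hzre]; norm_num
    have hzne : ∀ u : ℝ, z u ≠ 0 := by
      intro u h
      have := hzre u
      rw [h] at this
      simp at this
    have hz1 : ∀ u : ℝ, 1 ≤ ‖z u‖ := by
      intro u
      have h := Complex.abs_re_le_norm (z u)
      rw [hzre u] at h
      simpa using h
    have hbase : ∀ w : ℂ, HasDerivAt (fun w : ℂ => 1 + c * Complex.I * w) (c * Complex.I) w := by
      intro w
      simpa using ((hasDerivAt_id w).const_mul (c * Complex.I)).const_add 1
    have hD : ∀ (e : ℂ) (u : ℝ), HasDerivAt (fun v : ℝ => z v ^ e)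
        (e * z u ^ (e - 1) * (c * Complex.I)) u := by
      intro e u
      exact ((hbase (u : ℂ)).cpow_const (hslit u)).comp_ofReal
    set g : ℝ → ℂ := fun u => z u ^ b - 1 - Complex.I * u + ((q : ℂ)/2) * ((u : ℂ))^2 with hgdef
    set g1 : ℝ → ℂ := fun u => b * z u ^ (b - 1) * (c * Complex.I) - Complex.I + (q : ℂ) * u
      with hg1def
    set g2 : ℝ → ℂ := fun u => b * (b - 1) * z u ^ (b - 2) * (c * Complex.I)^2 + (q : ℂ)
      with hg2def
    set g3 : ℝ → ℂ := fun u => b * (b - 1) * (b - 2) * z u ^ (b - 3) * (c * Complex.I)^3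
      with hg3def
    have hg : ∀ u, HasDerivAt g (g1 u) u := by
      intro u
      have h := (((hD b u).sub_const 1).sub (hlin Complex.I u)).add (hqsq u)
      exact h
    have hg1 : ∀ u, HasDerivAt g1 (g2 u) u := by
      intro u
      have h := ((((hD (b-1) u).const_mul b).mul_const (c * Complex.I)).sub_const
        Complex.I).add (hlin (q : ℂ) u)
      refine h.congr_deriv ?_
      rw [hg2def]
      simp only []
      rw [show b - 1 - 1 = b - 2 by ring]
      ring
    have hg2 : ∀ u, HasDerivAt g2 (g3 u) u := by
      intro u
      have h := (((hD (b-2) u).const_mul (b * (b-1))).mul_const ((c * Complex.I)^2)).add_const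
        (q : ℂ)
      refine h.congr_deriv ?_
      rw [hg3def]
      simp only []
      rw [show b - 2 - 1 = b - 3 by ring]
      ring
    have hz0 : z 0 = 1 := by simp [hzdef]
    have h0 : g 0 = 0 := by
      rw [hgdef]; simp [hz0, Complex.one_cpow]
    have h10 : g1 0 = 0 := by
      rw [hg1def]
      simp only [hz0, Complex.one_cpow, Complex.ofReal_zero, mul_zero, mul_one, add_zero]
      rw [hbdef]
      field_simp
      simp
    have h20 : g2 0 = 0 := by
      rw [hg2def]
      simp only [hz0, Complex.one_cpow, mul_one]
      rw [mul_pow, Complex.I_sq, hbdef, hcdef]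
      field_simp
      ring
    have hKval : b * (b - 1) * (b - 2) * (c * Complex.I)^3 = -((q : ℂ) * (2*q - 1)) * Complex.I := by
      rw [mul_pow, show Complex.I ^ 3 = -Complex.I by
        rw [pow_succ, Complex.I_sq]; ring]
      rw [hbdef, hcdef]
      field_simp
      ring
    have hM : ∀ u, ‖g3 u‖ ≤ 6 := by
      intro u
      have hrw : g3 u = (b * (b - 1) * (b - 2) * (c * Complex.I)^3) * z u ^ (b - 3) := by
        rw [hg3def]; ring
      rw [hrw, hKval]
      rw [norm_mul]
      have hz3 : ‖z u ^ (b - 3)‖ ≤ 1 := by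
        rw [Complex.norm_cpow_of_ne_zero (hzne u)]
        have him : (b - 3).im = 0 := by rw [hbre]; simp
        have hre : (b - 3).re = 1/(1-q) - 3 := by
          rw [hbre, show ((1/(1-q):ℝ):ℂ) - 3 = (((1/(1-q) - 3 : ℝ)):ℂ) by push_cast; ring,
            Complex.ofReal_re]
        rw [him, hre]
        simp only [mul_zero, Real.exp_zero, div_one]
        apply Real.rpow_le_one_of_one_le_of_nonpos (hz1 u)
        have : 1/(1-q) < 0 := div_neg_of_pos_of_neg one_pos (by linarith)
        linarith
      have hKnorm : ‖-((q : ℂ) * (2*q - 1)) * Complex.I‖ = q * (2*q - 1) := by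
        rw [norm_mul, Complex.norm_I, mul_one, norm_neg]
        have : (q : ℂ) * (2*q - 1) = ((q * (2*q - 1) : ℝ) : ℂ) := by push_cast; ring
        rw [this, Complex.norm_real, Real.norm_eq_abs, _root_.abs_of_nonneg (by nlinarith)]
      rw [hKnorm]
      calc q * (2*q-1) * ‖z u ^ (b-3)‖ ≤ q * (2*q-1) * 1 := by
            apply mul_le_mul_of_nonneg_left hz3 (by nlinarith)
      _ ≤ 6 := by nlinarith
    have := triple_deriv_bound hg hg1 hg2 h0 h10 h20 hM t
    have hqexp : qExpC q (Complex.I * t) = z t ^ b := by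
      rw [qExpC, if_neg hqR, hbdef, hcdef, hzdef]
      congr 1
      ring
    rw [hqexp]
    exact this

lemma qExpC_norm_le_one (q : ℝ) (hq1 : 1 ≤ q) (t : ℝ) :
    ‖qExpC q (Complex.I * t)‖ ≤ 1 := by
  rcases eq_or_ne q 1 with hq | hq
  · subst hq
    rw [qExpC, if_pos rfl, Complex.norm_exp]
    have : (Complex.I * (t:ℂ)).re = 0 := by simp
    rw [this, Real.exp_zero]
  · have hqC : (q : ℂ) ≠ 1 := by exact_mod_cast hq
    have hgt : 1 < q := lt_of_le_of_ne hq1 (Ne.symm hq)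
    rw [qExpC, if_neg hq]
    set z : ℂ := 1 + (1 - (q:ℂ)) * (Complex.I * t) with hz
    have hzre : z.re = 1 := by simp [hz]
    have hzne : z ≠ 0 := by
      intro h; rw [h] at hzre; simp at hzre
    have hz1 : 1 ≤ ‖z‖ := by
      have h := Complex.abs_re_le_norm z
      rw [hzre] at h; simpa using h
    have hb : (1:ℂ) / (1 - (q:ℂ)) = ((1/(1-q) : ℝ) : ℂ) := by push_cast; ring
    rw [Complex.norm_cpow_of_ne_zero hzne, hb]
    simp only [Complex.ofReal_im, mul_zero, Real.exp_zero, div_one, Complex.ofReal_re]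
    exact Real.rpow_le_one_of_one_le_of_nonpos hz1
      (le_of_lt (div_neg_of_pos_of_neg one_pos (by linarith)))

lemma qExpC_continuousI (q : ℝ) : Continuous (fun t : ℝ => qExpC q (Complex.I * t)) := by
  rcases eq_or_ne q 1 with hq | hq
  · subst hq
    simp only [qExpC, if_pos rfl]
    exact Complex.continuous_exp.comp (continuous_const.mul Complex.continuous_ofReal)
  · simp only [qExpC, if_neg hq]
    rw [continuous_iff_continuousAt]
    intro t
    apply ContinuousAt.cpow _ continuousAt_const _
    · exact (continuous_const.add (continuous_const.mul
        (continuous_const.mul Complex.continuous_ofReal))).continuousAt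
    · rw [Complex.mem_slitPlane_iff]
      left; simp

lemma rpow_self_mul (q y : ℝ) (hq1 : 1 ≤ q) (hy : 0 ≤ y) : y * y ^ (q - 1) = y ^ q := by
  rcases eq_or_lt_of_le hy with h | h
  · rw [← h]
    rw [Real.zero_rpow (by positivity : q ≠ 0), zero_mul]
  · nth_rewrite 1 [← Real.rpow_one y]
    rw [← Real.rpow_add h]
    ring_nf
lemma rpow_self_mul_sq (q y : ℝ) (hq1 : 1 ≤ q) (hy : 0 ≤ y) :
    y * (y ^ (q - 1)) ^ 2 = y ^ (2 * q - 1) := by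
  rcases eq_or_lt_of_le hy with h | h
  · rw [← h, Real.zero_rpow (by intro hc; nlinarith : 2*q - 1 ≠ 0), zero_mul]
  · rw [sq, ← Real.rpow_add h]
    nth_rewrite 1 [← Real.rpow_one y]
    rw [← Real.rpow_add h]
    ring_nf

noncomputable def Rq (q : ℝ) (t : ℝ) : ℂ :=
  qExpC q (Complex.I * t) - 1 - Complex.I * t + ((q : ℂ)/2) * (t : ℂ)^2






lemma Rq_cubic (q : ℝ) (hq1 : 1 ≤ q) (hq2 : q < 2) (t : ℝ) : ‖Rq q t‖ ≤ 6 * |t| ^ 3 :=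
  qExpC_taylor q hq1 hq2 t

lemma Rq_quad (q : ℝ) (hq1 : 1 ≤ q) (hq2 : q < 2) (t : ℝ) : ‖Rq q t‖ ≤ 6 * t ^ 2 := by
  rcases le_or_gt |t| 1 with h | h
  · calc ‖Rq q t‖ ≤ 6 * |t| ^ 3 := Rq_cubic q hq1 hq2 t
    _ ≤ 6 * t ^ 2 := by nlinarith [abs_nonneg t, sq_abs t]
  · have h1 : ‖Rq q t‖ ≤ ‖qExpC q (Complex.I * t)‖ + ‖(1:ℂ)‖ + ‖Complex.I * (t:ℂ)‖
        + ‖((q:ℂ)/2) * (t:ℂ)^2‖ := by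
      rw [Rq]
      calc ‖qExpC q (Complex.I * t) - 1 - Complex.I * t + ((q:ℂ)/2) * (t:ℂ)^2‖
          ≤ ‖qExpC q (Complex.I * t) - 1 - Complex.I * t‖ + ‖((q:ℂ)/2) * (t:ℂ)^2‖ :=
            norm_add_le _ _
      _ ≤ (‖qExpC q (Complex.I * t) - 1‖ + ‖Complex.I * (t:ℂ)‖) + ‖((q:ℂ)/2) * (t:ℂ)^2‖ := by
            gcongr; exact norm_sub_le _ _
      _ ≤ (‖qExpC q (Complex.I * t)‖ + ‖(1:ℂ)‖ + ‖Complex.I * (t:ℂ)‖) + ‖((q:ℂ)/2) * (t:ℂ)^2‖ := by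
            gcongr; exact norm_sub_le _ _
    have h2 : ‖Complex.I * (t:ℂ)‖ = |t| := by
      rw [norm_mul, Complex.norm_I, one_mul, Complex.norm_real, Real.norm_eq_abs]
    have h3 : ‖((q:ℂ)/2) * (t:ℂ)^2‖ = (q/2) * t^2 := by
      rw [show ((q:ℂ)/2) * (t:ℂ)^2 = (((q/2*t^2 : ℝ)):ℂ) by push_cast; ring,
        Complex.norm_real, Real.norm_eq_abs,
        _root_.abs_of_nonneg (mul_nonneg (by linarith) (sq_nonneg t))]
    have h4 := qExpC_norm_le_one q hq1 t
    rw [h2, h3, norm_one] at h1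
    have ht2 : 1 ≤ t^2 := by nlinarith [sq_abs t]
    have ht : |t| ≤ t^2 := by nlinarith [sq_abs t, abs_nonneg t]
    nlinarith

end QFourierAux

/-- The small-`ξ` asymptotic expansion of the `q`-Fourier transform of a probability
density: `F_q[f](ξ) = 1 + iξ μ_q(f) ν_q(f) - (q/2) ξ² τ + o(ξ²)` as `ξ → 0`, where
`ν_q(f) = ∫ f^q` and `τ = ∫ x² f^{2q-1}`. -/
theorem qFourier_small_xi_expansion (q : ℝ) (hq1 : 1 ≤ q) (hq2 : q < 2)
    (f : ℝ → ℝ) (hf0 : ∀ x, 0 ≤ f x) (hfi : Integrable f) (hf1 : ∫ x : ℝ, f x = 1)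
    (hν : Integrable (fun x : ℝ => f x ^ q))
    (hν2 : Integrable (fun x : ℝ => f x ^ (2 * q - 1)))
    (hmean : Integrable (fun x : ℝ => x * f x ^ q))
    (hτ : Integrable (fun x : ℝ => x ^ 2 * f x ^ (2 * q - 1))) :
    Tendsto
      (fun ξ : ℝ =>
        (qFourier q f ξ - 1 - Complex.I * (ξ : ℂ) * ((qMean q f * ∫ x : ℝ, f x ^ q : ℝ) : ℂ) +
            (((q / 2) * ξ ^ 2 * ∫ x : ℝ, x ^ 2 * f x ^ (2 * q - 1) : ℝ) : ℂ)) / ((ξ ^ 2 : ℝ) : ℂ))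
      (nhdsWithin 0 {0}ᶜ) (nhds 0) := by
  have hν0 : (∫ x : ℝ, f x ^ q) ≠ 0 := by
    intro h
    have hnn : 0 ≤ (fun x : ℝ => f x ^ q) := fun x => Real.rpow_nonneg (hf0 x) q
    have hz := (integral_eq_zero_iff_of_nonneg hnn hν).mp h
    have hfz : f =ᵐ[(volume : Measure ℝ)] 0 := by
      filter_upwards [hz] with x hx
      have hx' : f x ^ q = 0 := hx
      exact ((Real.rpow_eq_zero_iff_of_nonneg (hf0 x)).mp hx').1
    rw [integral_congr_ae hfz] at hf1
    simp at hf1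
  have hμν : qMean q f * (∫ x : ℝ, f x ^ q) = ∫ x : ℝ, x * f x ^ q := by
    rw [qMean]; field_simp
  set s : ℝ → ℝ := fun x => f x ^ (q - 1) with hsdef
  have hys : ∀ x, f x * s x = f x ^ q := fun x => rpow_self_mul q (f x) hq1 (hf0 x)
  have hys2 : ∀ x, f x * (s x) ^ 2 = f x ^ (2 * q - 1) :=
    fun x => rpow_self_mul_sq q (f x) hq1 (hf0 x)
  have hRcont : Continuous (Rq q) := by
    unfold Rq
    exact ((((qExpC_continuousI q).sub continuous_const).sub
      (continuous_const.mul Complex.continuous_ofReal)).add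
      (continuous_const.mul ((Complex.continuous_ofReal).pow 2)))
  have hfm : AEMeasurable f (volume : Measure ℝ) := hfi.aemeasurable
  have hsm : AEMeasurable s (volume : Measure ℝ) := by
    have hc : Continuous (fun y : ℝ => y ^ (q - 1)) :=
      continuous_iff_continuousAt.2 fun y =>
        Real.continuousAt_rpow_const y (q - 1) (Or.inr (by linarith))
    exact hc.measurable.comp_aemeasurable hfm
  have htm : ∀ ξ : ℝ, AEMeasurable (fun x => x * ξ * s x) (volume : Measure ℝ) :=
    fun ξ => (aemeasurable_id.mul_const ξ).mul hsm
  have hFm : ∀ ξ : ℝ, AEStronglyMeasurable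
      (fun x : ℝ => (f x : ℂ) * Rq q (x * ξ * s x) / ((ξ ^ 2 : ℝ) : ℂ)) volume := by
    intro ξ
    exact (((Complex.continuous_ofReal.measurable.comp_aemeasurable hfm).mul
      (hRcont.measurable.comp_aemeasurable (htm ξ))).div_const _).aestronglyMeasurable
  -- the key identity
  have key : ∀ ξ : ℝ,
      (qFourier q f ξ - 1 - Complex.I * (ξ : ℂ) * ((qMean q f * ∫ x : ℝ, f x ^ q : ℝ) : ℂ) +
          (((q / 2) * ξ ^ 2 * ∫ x : ℝ, x ^ 2 * f x ^ (2 * q - 1) : ℝ) : ℂ)) / ((ξ ^ 2 : ℝ) : ℂ)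
      = ∫ x : ℝ, (f x : ℂ) * Rq q (x * ξ * s x) / ((ξ ^ 2 : ℝ) : ℂ) := by
    intro ξ
    rw [integral_div]
    congr 1
    have hA : Integrable (fun x : ℝ =>
        (f x : ℂ) * qExpC q (Complex.I * ((x * ξ * s x : ℝ) : ℂ))) := by
      apply Integrable.mono' hfi
      · exact ((Complex.continuous_ofReal.measurable.comp_aemeasurable hfm).mul
          ((qExpC_continuousI q).measurable.comp_aemeasurable (htm ξ))).aestronglyMeasurable
      · filter_upwards with x
        rw [norm_mul, Complex.norm_real, Real.norm_eq_abs, _root_.abs_of_nonneg (hf0 x)]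
        calc f x * ‖qExpC q (Complex.I * ((x * ξ * s x : ℝ) : ℂ))‖ ≤ f x * 1 :=
              mul_le_mul_of_nonneg_left (qExpC_norm_le_one q hq1 _) (hf0 x)
        _ = f x := mul_one _
    have hB : Integrable (fun x : ℝ => ((f x : ℝ) : ℂ)) := hfi.ofReal
    have hC : Integrable (fun x : ℝ => Complex.I * (ξ : ℂ) * ((x * f x ^ q : ℝ) : ℂ)) := by
      have h := (hmean.ofReal (𝕜 := ℂ)).const_mul (Complex.I * (ξ : ℂ))
      simpa [mul_assoc] using h
    have hD : Integrable (fun x : ℝ => (((q / 2) * ξ ^ 2 * (x ^ 2 * f x ^ (2 * q - 1)) : ℝ) : ℂ)) :=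
      (hτ.const_mul ((q / 2) * ξ ^ 2)).ofReal
    have hqf : qFourier q f ξ
        = ∫ x : ℝ, (f x : ℂ) * qExpC q (Complex.I * ((x * ξ * s x : ℝ) : ℂ)) := by
      rw [qFourier]
      apply integral_congr_ae (ae_of_all _ _)
      intro x
      have harg : Complex.I * (x : ℂ) * (ξ : ℂ) * ((f x ^ (q - 1) : ℝ) : ℂ)
          = Complex.I * ((x * ξ * s x : ℝ) : ℂ) := by
        rw [hsdef]; push_cast; ring
      rw [harg]
    have e1 : (1 : ℂ) = ∫ x : ℝ, ((f x : ℝ) : ℂ) := by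
      rw [show (1 : ℂ) = ((1 : ℝ) : ℂ) by norm_num, ← hf1]
      exact integral_ofReal.symm
    have e2 : Complex.I * (ξ : ℂ) * ((qMean q f * ∫ x : ℝ, f x ^ q : ℝ) : ℂ)
        = ∫ x : ℝ, Complex.I * (ξ : ℂ) * ((x * f x ^ q : ℝ) : ℂ) := by
      rw [hμν, integral_const_mul]
      congr 1
      exact integral_ofReal.symm
    have e3 : (((q / 2) * ξ ^ 2 * ∫ x : ℝ, x ^ 2 * f x ^ (2 * q - 1) : ℝ) : ℂ)
        = ∫ x : ℝ, (((q / 2) * ξ ^ 2 * (x ^ 2 * f x ^ (2 * q - 1)) : ℝ) : ℂ) := by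
      rw [← MeasureTheory.integral_const_mul]
      exact integral_ofReal.symm
    have hAB : Integrable (fun x : ℝ =>
        (f x : ℂ) * qExpC q (Complex.I * ((x * ξ * s x : ℝ) : ℂ)) - ((f x : ℝ) : ℂ)) := hA.sub hB
    have hABC : Integrable (fun x : ℝ =>
        (f x : ℂ) * qExpC q (Complex.I * ((x * ξ * s x : ℝ) : ℂ)) - ((f x : ℝ) : ℂ)
          - Complex.I * (ξ : ℂ) * ((x * f x ^ q : ℝ) : ℂ)) := hAB.sub hC
    rw [hqf, e1, e2, e3, ← integral_sub hA hB, ← integral_sub hAB hC,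
      ← integral_add hABC hD]
    apply integral_congr_ae (ae_of_all _ _)
    intro x
    have r1 : ((f x : ℝ) : ℂ) * ((s x : ℝ) : ℂ) = ((f x ^ q : ℝ) : ℂ) := by
      rw [← Complex.ofReal_mul, hys x]
    have r2 : ((f x : ℝ) : ℂ) * ((s x : ℝ) : ℂ) ^ 2 = ((f x ^ (2 * q - 1) : ℝ) : ℂ) := by
      rw [← Complex.ofReal_pow, ← Complex.ofReal_mul, hys2 x]
    rw [Rq]
    push_cast
    linear_combination (Complex.I * (x : ℂ) * (ξ : ℂ)) * r1
      - ((q : ℂ)/2 * (x : ℂ)^2 * (ξ : ℂ)^2) * r2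
  -- dominated convergence
  have hlim : Tendsto (fun ξ : ℝ => ∫ x : ℝ, (f x : ℂ) * Rq q (x * ξ * s x) / ((ξ ^ 2 : ℝ) : ℂ))
      (nhdsWithin 0 {0}ᶜ) (nhds 0) := by
    have main := tendsto_integral_filter_of_dominated_convergence
      (μ := (volume : Measure ℝ)) (l := nhdsWithin (0:ℝ) {0}ᶜ)
      (F := fun (ξ : ℝ) (x : ℝ) => (f x : ℂ) * Rq q (x * ξ * s x) / ((ξ ^ 2 : ℝ) : ℂ))
      (f := fun _ => (0 : ℂ)) (bound := fun x => 6 * (x ^ 2 * f x ^ (2 * q - 1)))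
      (Eventually.of_forall hFm) ?_ (hτ.const_mul 6) ?_
    · simpa using main
    · -- bound
      filter_upwards [self_mem_nhdsWithin] with ξ hξ
      have hξ0 : ξ ≠ 0 := hξ
      filter_upwards with x
      have hn2 : ‖((ξ ^ 2 : ℝ) : ℂ)‖ = ξ ^ 2 := by
        rw [Complex.norm_real, Real.norm_eq_abs, _root_.abs_of_nonneg (sq_nonneg ξ)]
      rw [norm_div, norm_mul, hn2, Complex.norm_real, Real.norm_eq_abs,
        _root_.abs_of_nonneg (hf0 x)]
      have hq2' : (0:ℝ) < ξ ^ 2 := by positivity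
      calc f x * ‖Rq q (x * ξ * s x)‖ / ξ ^ 2
          ≤ f x * (6 * (x * ξ * s x) ^ 2) / ξ ^ 2 := by
            gcongr
            exacts [hf0 x, Rq_quad q hq1 hq2 _]
      _ = 6 * (x ^ 2 * f x ^ (2 * q - 1)) := by
            rw [show f x * (6 * (x * ξ * s x) ^ 2) = 6 * (ξ ^ 2 * (x ^ 2 * (f x * (s x) ^ 2)))
              by ring, hys2 x]
            field_simp
    · -- pointwise limit
      filter_upwards with x
      apply squeeze_zero_norm' (a := fun ξ : ℝ => (6 * f x * |x * s x| ^ 3) * |ξ|)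
      · filter_upwards [self_mem_nhdsWithin] with ξ hξ
        have hξ0 : ξ ≠ 0 := hξ
        have hn2 : ‖((ξ ^ 2 : ℝ) : ℂ)‖ = ξ ^ 2 := by
          rw [Complex.norm_real, Real.norm_eq_abs, _root_.abs_of_nonneg (sq_nonneg ξ)]
        rw [norm_div, norm_mul, hn2, Complex.norm_real, Real.norm_eq_abs,
          _root_.abs_of_nonneg (hf0 x)]
        have hq2' : (0:ℝ) < ξ ^ 2 := by positivity
        calc f x * ‖Rq q (x * ξ * s x)‖ / ξ ^ 2
            ≤ f x * (6 * |x * ξ * s x| ^ 3) / ξ ^ 2 := by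
              gcongr
              exacts [hf0 x, Rq_cubic q hq1 hq2 _]
        _ = (6 * f x * |x * s x| ^ 3) * |ξ| := by
              rw [show x * ξ * s x = (x * s x) * ξ by ring, abs_mul, mul_pow]
              rw [show ξ ^ 2 = |ξ| ^ 2 from (sq_abs ξ).symm]
              have habs : |ξ| ≠ 0 := abs_ne_zero.mpr hξ0
              field_simp
      · have h : Tendsto (fun ξ : ℝ => (6 * f x * |x * s x| ^ 3) * |ξ|) (nhds 0)
            (nhds ((6 * f x * |x * s x| ^ 3) * |(0:ℝ)|)) :=
          (continuous_const.mul continuous_abs).tendsto 0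
        have h2 := h.mono_left (nhdsWithin_le_nhds (s := {(0:ℝ)}ᶜ))
        simpa using h2
  exact Tendsto.congr (fun ξ => (key ξ).symm) hlim
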